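/- arXiv:2004.06367 — 2 statements merged into one kernel-verified Lean document; each statement's English description precedes it below -/
import Mathlib

section
/- Let H be a feasible mono-block 2-augmented chemical graph with respect to bounds (g_ℓ, g_u), i.e., g_ℓ ≤ f(H) ≤ g_u and res(v) ≥ 0 for all v. Define g†_ℓ by: g†_ℓ[t] = g_ℓ[t] for colored sequences t of length 0; g†_ℓ[t] = max{0, g_ℓ[t] − 1} for t = (c,m,c') of length 1 with c ≠ c'; g†_ℓ[t] = max{0, g_ℓ[t] − 2} for t = (c,m,c) of length 1; and g†_ℓ[t] = 0 for all longer t. Then for each junction pair {x,y} of H, the graph H − xy obtained by removing all edges between x and y is a monocyclic graph satisfying g†_ℓ ≤ f(H − xy) ≤ g_u with res(v) ≥ 0 for all its vertices. -/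
structure CMGraph (V S : Type) where
  mul : V → V → ℕ
  symm : ∀ u v, mul u v = mul v u
  loopless : ∀ v, mul v v = 0
  col : V → S

namespace CMGraph

variable {V V' S : Type}

def toSimple (G : CMGraph V S) : SimpleGraph V where
  Adj u v := 0 < G.mul u v
  symm := ⟨fun u v (h : 0 < G.mul u v) => show 0 < G.mul v u by rwa [G.symm v u]⟩
  loopless := ⟨fun v (h : 0 < G.mul v v) => by simp [G.loopless] at h⟩

def CycleEdge (G : CMGraph V S) (e : Sym2 V) : Prop :=
  ∃ (w : V) (c : G.toSimple.Walk w w), c.IsCycle ∧ e ∈ c.edges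

def OnAllCycles (G : CMGraph V S) (v : V) : Prop :=
  ∀ (w : V) (c : G.toSimple.Walk w w), c.IsCycle → v ∈ c.support

def cycleVerts (G : CMGraph V S) : Set V :=
  {v | ∃ (w : V) (c : G.toSimple.Walk w w), c.IsCycle ∧ v ∈ c.support}

def Connected (G : CMGraph V S) : Prop := G.toSimple.Connected

def IsKAugTree (G : CMGraph V S) (k : ℕ) : Prop :=
  G.Connected ∧ G.toSimple.edgeSet.ncard = (Nat.card V - 1) + k

def Monocyclic (G : CMGraph V S) : Prop :=
  G.Connected ∧ ∃ (w : V) (c : G.toSimple.Walk w w), c.IsCycle ∧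
    ∀ (w' : V) (c' : G.toSimple.Walk w' w'), c'.IsCycle →
      {e | e ∈ c'.edges} = {e | e ∈ c.edges}

def OnCommonCycle (G : CMGraph V S) (u v : V) : Prop :=
  ∃ (w : V) (c : G.toSimple.Walk w w), c.IsCycle ∧ u ∈ c.support ∧ v ∈ c.support

def IsBlock (G : CMGraph V S) (X : Set V) : Prop :=
  (∀ u ∈ X, ∀ v ∈ X, u ≠ v → G.OnCommonCycle u v) ∧
  ∀ Y : Set V, X ⊆ Y → (∀ u ∈ Y, ∀ v ∈ Y, u ≠ v → G.OnCommonCycle u v) → Y = X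

def MonoBlock (G : CMGraph V S) : Prop :=
  ∃! X : Set V, G.IsBlock X ∧ 2 ≤ X.ncard

def IsMB2AT (G : CMGraph V S) : Prop := G.IsKAugTree 2 ∧ G.MonoBlock

def IsJunction (G : CMGraph V S) (v : V) : Prop :=
  v ∈ G.cycleVerts ∧ G.OnAllCycles v

def deg (G : CMGraph V S) [Fintype V] (v : V) : ℕ := ∑ u, G.mul v u

def res (G : CMGraph V S) [Fintype V] (val : S → ℕ) (v : V) : ℕ :=
  val (G.col v) - G.deg v

def addMul (G : CMGraph V S) [DecidableEq V] (x y : V) (p : ℕ) (hxy : x ≠ y) :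
    CMGraph V S where
  mul u v := if (u = x ∧ v = y) ∨ (u = y ∧ v = x) then G.mul u v + p else G.mul u v
  symm := by
    intro u v
    try dsimp only
    by_cases h : (u = x ∧ v = y) ∨ (u = y ∧ v = x)
    · rw [if_pos h, if_pos (by tauto)]
      try rw [G.symm u v]
    · rw [if_neg h, if_neg (by tauto)]
      try rw [G.symm u v]
  loopless := by
    intro v
    try dsimp only
    have h1 : ¬((v = x ∧ v = y) ∨ (v = y ∧ v = x)) := by
      rintro (⟨h1, h2⟩ | ⟨h1, h2⟩)
      · exact hxy (h1.symm.trans h2)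
      · exact hxy (h2.symm.trans h1)
    rw [if_neg h1, G.loopless]
  col := G.col

def removePair (G : CMGraph V S) [DecidableEq V] (x y : V) : CMGraph V S where
  mul u v := if (u = x ∧ v = y) ∨ (u = y ∧ v = x) then 0 else G.mul u v
  symm := by
    intro u v
    try dsimp only
    by_cases h : (u = x ∧ v = y) ∨ (u = y ∧ v = x)
    · rw [if_pos h, if_pos (by tauto)]
      try rw [G.symm u v]
    · rw [if_neg h, if_neg (by tauto)]
      try rw [G.symm u v]
  loopless := by
    intro v
    try dsimp only
    by_cases h : (v = x ∧ v = y) ∨ (v = y ∧ v = x)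
    · simp [h]
    · simp [h, G.loopless]
  col := G.col

def delCyc (G : CMGraph V S) : SimpleGraph V :=
  G.toSimple.deleteEdges {e | G.CycleEdge e}

def pend (G : CMGraph V S) (v : V) : Set V := {u | G.delCyc.Reachable v u}

def subAt (G : CMGraph V S) (v0 u : V) : Set V :=
  {w | w ∈ G.pend v0 ∧ ∀ p : G.delCyc.Walk v0 w, p.IsPath → u ∈ p.support}

def ParentIn (G : CMGraph V S) (v0 z u : V) : Prop :=
  G.delCyc.Adj z u ∧ u ∈ G.subAt v0 z ∧ u ≠ v0

def Avoids (G : CMGraph V S) {u v w : V} (p : G.toSimple.Walk u v)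
    (c : G.toSimple.Walk w w) : Prop :=
  p.IsPath ∧ ∀ e ∈ p.edges, e ∉ c.edges

end CMGraph

def CMIso {V V' S : Type} (G : CMGraph V S) (G' : CMGraph V' S) : Prop :=
  ∃ ψ : V ≃ V', (∀ v, G'.col (ψ v) = G.col v) ∧ ∀ u v, G'.mul (ψ u) (ψ v) = G.mul u v

namespace CMGraph

/-- The colored sequence of multiplicities/colors along a walk (excluding the
color of the starting vertex). -/
def gammaList {V S : Type} (G : CMGraph V S) :
    {u v : V} → G.toSimple.Walk u v → List (ℕ × S)
  | _, _, SimpleGraph.Walk.nil => []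
  | u, _, SimpleGraph.Walk.cons (v := b) _ p =>
      (G.mul u b, G.col b) :: G.gammaList p

/-- The frequency of a colored sequence `t`: the number of vertex-rooted paths
in `G` whose colored sequence is `t`. -/
noncomputable def frq {V S : Type} (G : CMGraph V S) (t : S × List (ℕ × S)) : ℕ :=
  Set.ncard {x : (u : V) × (v : V) × G.toSimple.Walk u v |
    x.2.2.IsPath ∧ (G.col x.1, G.gammaList x.2.2) = t}

end CMGraph

/-- The modified lower bound vector g†. -/
def gdag {S : Type} [DecidableEq S] (gl : S × List (ℕ × S) → ℕ) :
    S × List (ℕ × S) → ℕ :=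
  fun t => match t.2 with
    | [] => gl t
    | [(_, c')] => if t.1 = c' then gl t - 2 else gl t - 1
    | _ => 0

section Aux

open SimpleGraph

variable {V S : Type}

lemma CMGraph.toSimple_adj (G : CMGraph V S) (u v : V) :
    G.toSimple.Adj u v ↔ 0 < G.mul u v := Iff.rfl

lemma CMGraph.removePair_mul_le [DecidableEq V] (G : CMGraph V S) (x y u v : V) :
    (G.removePair x y).mul u v ≤ G.mul u v := by
  simp only [CMGraph.removePair]
  split <;> omega

lemma CMGraph.removePair_mul_of_ne [DecidableEq V] (G : CMGraph V S) {x y u v : V}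
    (h : ¬((u = x ∧ v = y) ∨ (u = y ∧ v = x))) :
    (G.removePair x y).mul u v = G.mul u v := by
  simp only [CMGraph.removePair, if_neg h]

lemma CMGraph.removePair_mul_pair [DecidableEq V] (G : CMGraph V S) {x y u v : V}
    (h : (u = x ∧ v = y) ∨ (u = y ∧ v = x)) :
    (G.removePair x y).mul u v = 0 := by
  simp only [CMGraph.removePair, if_pos h]

lemma CMGraph.removePair_toSimple_le [DecidableEq V] (G : CMGraph V S) (x y : V) :
    (G.removePair x y).toSimple ≤ G.toSimple := by
  intro u v h
  rw [CMGraph.toSimple_adj] at h ⊢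
  exact lt_of_lt_of_le h (G.removePair_mul_le x y u v)

lemma CMGraph.removePair_adj [DecidableEq V] {G : CMGraph V S} {x y u v : V} :
    (G.removePair x y).toSimple.Adj u v ↔
      G.toSimple.Adj u v ∧ ¬((u = x ∧ v = y) ∨ (u = y ∧ v = x)) := by
  rw [CMGraph.toSimple_adj, CMGraph.toSimple_adj]
  by_cases hp : (u = x ∧ v = y) ∨ (u = y ∧ v = x)
  · rw [G.removePair_mul_pair hp]
    simp [hp]
  · rw [G.removePair_mul_of_ne hp]
    simp [hp]

lemma CMGraph.removePair_toSimple [DecidableEq V] (G : CMGraph V S) {x y : V} (hxy : x ≠ y) :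
    (G.removePair x y).toSimple = G.toSimple \ SimpleGraph.fromEdgeSet {s(x, y)} := by
  ext u v
  rw [CMGraph.removePair_adj, SimpleGraph.sdiff_adj, SimpleGraph.fromEdgeSet_adj,
    Set.mem_singleton_iff, Sym2.eq_iff]
  constructor
  · rintro ⟨ha, hp⟩
    exact ⟨ha, fun h => hp h.1⟩
  · rintro ⟨ha, hp⟩
    refine ⟨ha, fun h => hp ⟨h, ?_⟩⟩
    rcases h with ⟨rfl, rfl⟩ | ⟨rfl, rfl⟩
    · exact hxy
    · exact hxy.symm

lemma reachable_del_of_walk {G : SimpleGraph V} {x y : V}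
    (hxy : (G \ SimpleGraph.fromEdgeSet {s(x, y)}).Reachable x y) :
    ∀ {u v : V}, G.Walk u v → (G \ SimpleGraph.fromEdgeSet {s(x, y)}).Reachable u v := by
  intro u v p
  induction p with
  | nil => rfl
  | @cons a b c hab p ih =>
    refine SimpleGraph.Reachable.trans ?_ ih
    by_cases he : (a = x ∧ b = y) ∨ (a = y ∧ b = x)
    · rcases he with ⟨rfl, rfl⟩ | ⟨rfl, rfl⟩
      · exact hxy
      · exact hxy.symm
    · refine SimpleGraph.Adj.reachable ?_
      rw [SimpleGraph.sdiff_adj, SimpleGraph.fromEdgeSet_adj, Set.mem_singleton_iff, Sym2.eq_iff]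
      exact ⟨hab, fun h => he h.1⟩

lemma setOf_isPath_finite [Fintype V] (G : SimpleGraph V) :
    {z : (u : V) × (v : V) × G.Walk u v | z.2.2.IsPath}.Finite := by
  classical
  let T := (u : V) × (v : V) × {p : G.Walk u v // p.IsPath ∧ p.length < Fintype.card V}
  let F : T → (u : V) × (v : V) × G.Walk u v := fun t => ⟨t.1, t.2.1, t.2.2.1⟩
  haveI : Finite T := by infer_instance
  have hsub : {z : (u : V) × (v : V) × G.Walk u v | z.2.2.IsPath} ⊆ Set.range F := by
    rintro ⟨u, v, p⟩ hp
    exact ⟨⟨u, v, p, hp, hp.length_lt⟩, rfl⟩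
  exact (Set.finite_range F).subset hsub

lemma transfer_injective {G G' : SimpleGraph V} :
    ∀ {u v : V} (p q : G.Walk u v) (hp : ∀ e ∈ p.edges, e ∈ G'.edgeSet)
      (hq : ∀ e ∈ q.edges, e ∈ G'.edgeSet),
      p.transfer G' hp = q.transfer G' hq → p = q := by
  intro u v p
  induction p with
  | nil =>
    intro q hp hq h
    cases q with
    | nil => rfl
    | cons h' q' => simp [SimpleGraph.Walk.transfer] at h
  | @cons a b c hab p ih =>
    intro q hp hq h
    cases q with
    | nil =>
      simp [SimpleGraph.Walk.transfer] at h
      exact (SimpleGraph.Walk.not_nil_cons h).elim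
    | @cons _ b' _ h' q' =>
      simp only [SimpleGraph.Walk.transfer] at h
      injection h with _ hb _ h
      subst hb
      rw [heq_eq_eq] at h
      have := ih q' (fun e he => hp e (by simp [he])) (fun e he => hq e (by simp [he])) h
      subst this
      rfl

lemma CMGraph.gammaList_transfer [DecidableEq V] (H : CMGraph V S) (x y : V) :
    ∀ {u v : V} (p : (H.removePair x y).toSimple.Walk u v)
      (h : ∀ e ∈ p.edges, e ∈ H.toSimple.edgeSet),
      H.gammaList (p.transfer H.toSimple h) = (H.removePair x y).gammaList p := by
  intro u v p
  induction p with
  | nil => intro h; rfl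
  | @cons a b c hab p ih =>
    intro h
    have hmul : H.mul a b = (H.removePair x y).mul a b := by
      rw [CMGraph.removePair_adj] at hab
      exact (H.removePair_mul_of_ne hab.2).symm
    simp only [SimpleGraph.Walk.transfer, CMGraph.gammaList, hmul]
    rw [ih]
    rfl

lemma CMGraph.frq_removePair_le [Fintype V] [DecidableEq V] (H : CMGraph V S) (x y : V)
    (t : S × List (ℕ × S)) : (H.removePair x y).frq t ≤ H.frq t := by
  classical
  have hle : (H.removePair x y).toSimple ≤ H.toSimple := H.removePair_toSimple_le x y
  have hedges : ∀ {u v : V} (p : (H.removePair x y).toSimple.Walk u v),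
      ∀ e ∈ p.edges, e ∈ H.toSimple.edgeSet :=
    fun p e he => SimpleGraph.edgeSet_mono hle (p.edges_subset_edgeSet he)
  let F : ((u : V) × (v : V) × (H.removePair x y).toSimple.Walk u v) →
      ((u : V) × (v : V) × H.toSimple.Walk u v) :=
    fun z => ⟨z.1, z.2.1, z.2.2.transfer H.toSimple (hedges z.2.2)⟩
  refine Set.ncard_le_ncard_of_injOn F ?_ ?_ ?_
  · rintro ⟨u, v, p⟩ ⟨hp, ht⟩
    refine ⟨hp.transfer _, ?_⟩
    rw [← ht]
    show (H.col u, H.gammaList (p.transfer H.toSimple (hedges p))) = _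
    rw [H.gammaList_transfer x y p (hedges p)]
    rfl
  · rintro ⟨u, v, p⟩ _ ⟨u', v', p'⟩ _ h
    have h1 : u = u' := congrArg (fun z => z.1) h
    subst h1
    have h2 : v = v' := congrArg (fun z => z.2.1) h
    subst h2
    have h3 : p.transfer H.toSimple (hedges p) = p'.transfer H.toSimple (hedges p') := by
      injection h with hh1 hh2
      injection hh2 with hh3 hh4
      try exact eq_of_heq hh4
    have := transfer_injective p p' _ _ h3
    subst this
    rfl
  · exact (setOf_isPath_finite H.toSimple).subset (fun z hz => hz.1)

lemma CMGraph.frq_nil_eq [Fintype V] (G : CMGraph V S) (c : S) :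
    G.frq (c, ([] : List (ℕ × S))) = {v : V | G.col v = c}.ncard := by
  rw [CMGraph.frq]
  have himg : {z : (u : V) × (v : V) × G.toSimple.Walk u v |
      z.2.2.IsPath ∧ (G.col z.1, G.gammaList z.2.2) = (c, ([] : List (ℕ × S)))} =
      (fun v : V => (⟨v, v, SimpleGraph.Walk.nil⟩ : (u : V) × (v : V) × G.toSimple.Walk u v)) ''
        {v : V | G.col v = c} := by
    ext z
    constructor
    · intro hz
      obtain ⟨u, v, p⟩ := z
      obtain ⟨hp, ht⟩ := hz
      rw [Prod.mk.injEq] at ht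
      cases p with
      | nil => exact ⟨u, ht.1, rfl⟩
      | cons h q => simp [CMGraph.gammaList] at ht
    · rintro ⟨w, hw, rfl⟩
      refine ⟨SimpleGraph.Walk.IsPath.nil, ?_⟩
      have hwc : G.col w = c := hw
      simp [CMGraph.gammaList, hwc]
  rw [himg, Set.ncard_image_of_injective _ (fun a b h => congrArg Sigma.fst h)]

/-- The set of length-one rooted paths data. -/
def pairSet (G : CMGraph V S) (c : S) (m : ℕ) (c' : S) : Set (V × V) :=
  {p | G.toSimple.Adj p.1 p.2 ∧ G.col p.1 = c ∧ G.mul p.1 p.2 = m ∧ G.col p.2 = c'}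

lemma CMGraph.frq_single_eq [Fintype V] (G : CMGraph V S) (c : S) (m : ℕ) (c' : S) :
    G.frq (c, [(m, c')]) = (pairSet G c m c').ncard := by
  classical
  rw [CMGraph.frq]
  set A := {z : (u : V) × (v : V) × G.toSimple.Walk u v |
      z.2.2.IsPath ∧ (G.col z.1, G.gammaList z.2.2) = (c, [(m, c')])} with hA
  have hshape : ∀ (u v : V) (p : G.toSimple.Walk u v),
      (⟨u, v, p⟩ : (u : V) × (v : V) × G.toSimple.Walk u v) ∈ A →
      ∃ (h : G.toSimple.Adj u v), p = SimpleGraph.Walk.cons h SimpleGraph.Walk.nil := by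
    rintro u v p ⟨hp, ht⟩
    rw [Prod.mk.injEq] at ht
    cases p with
    | nil => simp [CMGraph.gammaList] at ht
    | @cons _ b _ hab q =>
      cases q with
      | nil => exact ⟨hab, rfl⟩
      | cons h2 q2 => simp [CMGraph.gammaList] at ht
  let f : ((u : V) × (v : V) × G.toSimple.Walk u v) → V × V := fun z => (z.1, z.2.1)
  have hinj : Set.InjOn f A := by
    rintro ⟨u, v, p⟩ hz ⟨u', v', p'⟩ hz' h
    simp only [f, Prod.mk.injEq] at h
    obtain ⟨rfl, rfl⟩ := h
    obtain ⟨h1, hp1⟩ := hshape _ _ _ hz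
    obtain ⟨h2, hp2⟩ := hshape _ _ _ hz'
    subst hp1
    subst hp2
    rfl
  have himg : f '' A = pairSet G c m c' := by
    ext ⟨a, b⟩
    constructor
    · rintro ⟨⟨u, v, p⟩, hz, hfz⟩
      simp only [f, Prod.mk.injEq] at hfz
      obtain ⟨rfl, rfl⟩ := hfz
      obtain ⟨h1, hp1⟩ := hshape _ _ _ hz
      subst hp1
      obtain ⟨hp, ht⟩ := hz
      rw [Prod.mk.injEq] at ht
      simp only [CMGraph.gammaList, List.cons.injEq, Prod.mk.injEq] at ht
      exact ⟨h1, ht.1, ht.2.1.1, ht.2.1.2⟩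
    · rintro ⟨hadj, hc, hm, hc'⟩
      refine ⟨⟨a, b, SimpleGraph.Walk.cons hadj SimpleGraph.Walk.nil⟩, ⟨?_, ?_⟩, rfl⟩
      · simp [SimpleGraph.Walk.cons_isPath_iff, hadj.ne]
      · simp [CMGraph.gammaList, hc, hm, hc']
  rw [← himg, Set.ncard_image_of_injOn hinj]

lemma pairSet_removePair [DecidableEq V] (H : CMGraph V S) (x y : V)
    (c : S) (m : ℕ) (c' : S) :
    pairSet (H.removePair x y) c m c' =
      pairSet H c m c' \ {(x, y), (y, x)} := by
  ext ⟨u, v⟩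
  simp only [pairSet, Set.mem_setOf_eq, Set.mem_diff, Set.mem_insert_iff,
    Set.mem_singleton_iff, Prod.mk.injEq]
  constructor
  · rintro ⟨hadj, hc, hm, hc'⟩
    rw [CMGraph.removePair_adj] at hadj
    obtain ⟨hadj, hp⟩ := hadj
    rw [H.removePair_mul_of_ne hp] at hm
    exact ⟨⟨hadj, hc, hm, hc'⟩, fun h => hp (by tauto)⟩
  · rintro ⟨⟨hadj, hc, hm, hc'⟩, hp⟩
    have hp' : ¬((u = x ∧ v = y) ∨ (u = y ∧ v = x)) := by tauto
    exact ⟨CMGraph.removePair_adj.mpr ⟨hadj, hp'⟩, hc,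
      by rw [H.removePair_mul_of_ne hp']; exact hm, hc'⟩

lemma ncard_pairSet_le [Fintype V] [DecidableEq V] (H : CMGraph V S) (x y : V)
    (c : S) (m : ℕ) (c' : S) :
    (pairSet H c m c').ncard ≤ (pairSet (H.removePair x y) c m c').ncard +
      (pairSet H c m c' ∩ {(x, y), (y, x)}).ncard := by
  rw [pairSet_removePair]
  have hsub : pairSet H c m c' ⊆
      (pairSet H c m c' \ {(x, y), (y, x)}) ∪ (pairSet H c m c' ∩ {(x, y), (y, x)}) := by
    intro p hp
    by_cases h : p ∈ ({(x, y), (y, x)} : Set (V × V))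
    · exact Or.inr ⟨hp, h⟩
    · exact Or.inl ⟨hp, h⟩
  exact le_trans (Set.ncard_le_ncard hsub (Set.toFinite _)) (Set.ncard_union_le _ _)

end Aux

/-- Removing all edges of a junction pair from a feasible mono-block
2-augmented tree yields a monocyclic graph feasible for (g†, gu). -/
theorem junction_pair_removal_feasible {V S : Type} [Fintype V] [DecidableEq V]
    [DecidableEq S] (H : CMGraph V S) (val : S → ℕ) (K : ℕ)
    (gl gu : S × List (ℕ × S) → ℕ)
    (hmb : H.IsMB2AT)
    (hres : ∀ v : V, H.deg v ≤ val (H.col v))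
    (hbound : ∀ t : S × List (ℕ × S), t.2.length ≤ K →
      gl t ≤ H.frq t ∧ H.frq t ≤ gu t)
    (x y : V) (hj : H.IsJunction x)
    (hn : ∃ (w : V) (c : H.toSimple.Walk w w), c.IsCycle ∧ s(x, y) ∈ c.edges) :
    (H.removePair x y).IsKAugTree 1 ∧
    (∀ v : V, (H.removePair x y).deg v ≤ val ((H.removePair x y).col v)) ∧
    (∀ t : S × List (ℕ × S), t.2.length ≤ K →
      gdag gl t ≤ (H.removePair x y).frq t ∧ (H.removePair x y).frq t ≤ gu t) := by
  classical
  obtain ⟨⟨hconn, hcard⟩, -⟩ := hmb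
  obtain ⟨w, cyc, hcyc, he⟩ := hn
  have hadj : H.toSimple.Adj x y := cyc.adj_of_mem_edges he
  have hne : x ≠ y := hadj.ne
  have hts : (H.removePair x y).toSimple =
      H.toSimple \ SimpleGraph.fromEdgeSet {s(x, y)} := H.removePair_toSimple hne
  have hreach : (H.toSimple \ SimpleGraph.fromEdgeSet {s(x, y)}).Reachable x y :=
    (SimpleGraph.adj_and_reachable_delete_edges_iff_exists_cycle.mpr ⟨w, cyc, hcyc, he⟩).2
  refine ⟨⟨?_, ?_⟩, ?_, ?_⟩
  · -- connectivity
    rw [CMGraph.Connected, hts]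
    haveI : Nonempty V := hconn.nonempty
    exact SimpleGraph.Connected.mk
      (fun u v => (hconn.preconnected u v).elim (fun p => reachable_del_of_walk hreach p))
  · -- edge count
    rw [hts]
    have hdel : H.toSimple \ SimpleGraph.fromEdgeSet {s(x, y)} =
        H.toSimple.deleteEdges {s(x, y)} := rfl
    rw [hdel, SimpleGraph.edgeSet_deleteEdges]
    rw [Set.ncard_diff_singleton_of_mem (H.toSimple.mem_edgeSet.mpr hadj),
      hcard]
    omega
  · -- residual degrees
    intro v
    refine le_trans ?_ (hres v)
    exact Finset.sum_le_sum (fun u _ => H.removePair_mul_le x y v u)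
  · -- frequency bounds
    rintro ⟨c, l⟩ ht
    refine ⟨?_, le_trans (H.frq_removePair_le x y _) (hbound _ ht).2⟩
    rcases l with _ | ⟨⟨m, c'⟩, _ | ⟨⟨m2, c2⟩, l⟩⟩
    · -- length 0
      show gl (c, []) ≤ _
      have h1 : (H.removePair x y).frq (c, ([] : List (ℕ × S))) =
          {v : V | H.col v = c}.ncard := (H.removePair x y).frq_nil_eq c
      have h2 : H.frq (c, ([] : List (ℕ × S))) = {v : V | H.col v = c}.ncard :=
        H.frq_nil_eq c
      rw [h1, ← h2]
      exact (hbound _ ht).1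
    · -- length 1
      have hkey : H.frq (c, [(m, c')]) ≤ (H.removePair x y).frq (c, [(m, c')]) +
          (pairSet H c m c' ∩ {(x, y), (y, x)}).ncard := by
        rw [H.frq_single_eq, (H.removePair x y).frq_single_eq]
        exact ncard_pairSet_le H x y c m c'
      have hgl : gl (c, [(m, c')]) ≤ H.frq (c, [(m, c')]) := (hbound _ ht).1
      have hB2 : (pairSet H c m c' ∩ {(x, y), (y, x)}).ncard ≤ 2 := by
        refine le_trans (Set.ncard_le_ncard Set.inter_subset_right (Set.toFinite _)) ?_
        refine le_trans (Set.ncard_insert_le _ _) ?_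
        simp [Set.ncard_singleton]
      by_cases hcc : c = c'
      · show (if c = c' then gl (c, [(m, c')]) - 2 else gl (c, [(m, c')]) - 1) ≤ _
        rw [if_pos hcc]
        omega
      · have hB1 : (pairSet H c m c' ∩ {(x, y), (y, x)}).ncard ≤ 1 := by
          rw [Set.ncard_le_one (Set.toFinite _)]
          rintro a ⟨ha, ha2⟩ b ⟨hb, hb2⟩
          simp only [Set.mem_insert_iff, Set.mem_singleton_iff] at ha2 hb2
          rcases ha2 with rfl | rfl <;> rcases hb2 with rfl | rfl
          · rfl
          · exfalso
            obtain ⟨-, hxc, -, hyc'⟩ := ha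
            obtain ⟨-, hyc, -, hxc'⟩ := hb
            exact hcc (hyc' ▸ hyc ▸ rfl)
          · exfalso
            obtain ⟨-, hyc, -, hxc'⟩ := ha
            obtain ⟨-, hxc, -, hyc'⟩ := hb
            exact hcc (hxc' ▸ hxc ▸ rfl)
          · rfl
        show (if c = c' then gl (c, [(m, c')]) - 2 else gl (c, [(m, c')]) - 1) ≤ _
        rw [if_neg hcc]
        omega
    · -- length ≥ 2
      show (0 : ℕ) ≤ _
      exact Nat.zero_le _
end

section
/- Let H be a mono-block 2-augmented tree with junctions u and v chosen so that (code(u), code*(u)) ≼ (code(v), code*(v)) lexicographically, with strict inequality. If C* is the cycle of H minimizing code(P(u,v;C*)) lexicographically among the three cycles, then the path P(u,v;C*) has length at least 2 (it is not a single edge uv). -/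
def listLe (a b : List ℕ) : Prop := a = b ∨ List.Lex (· < ·) a b

def listListLe (a b : List (List ℕ)) : Prop :=
  a = b ∨ List.Lex (List.Lex (· < ·)) a b

namespace CMGraph

variable {V S : Type}

/-- Rooted isomorphism between the pendent trees of `x` and `y` in `G`. -/
def PendIso (G : CMGraph V S) (x y : V) : Prop :=
  ∃ φ : V → V, Set.BijOn φ (G.pend x) (G.pend y) ∧ φ x = y ∧
    (∀ u ∈ G.pend x, G.col (φ u) = G.col u) ∧
    (∀ u ∈ G.pend x, ∀ v ∈ G.pend x, G.mul (φ u) (φ v) = G.mul u v)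

/-- `r` ranks the pendent trees of `G`: equal ranks exactly for
rooted-isomorphic pendent trees. -/
def RankSpec (G : CMGraph V S) (r : V → ℕ) : Prop :=
  ∀ u ∈ G.cycleVerts, ∀ v ∈ G.cycleVerts, (r u = r v ↔ G.PendIso u v)

/-- code(w) = (|V(G⟨w⟩)|, col(w), deg(w), rank(G⟨w⟩)), ordered lexicographically. -/
noncomputable def codeT (G : CMGraph V S) [Fintype V] (r : V → ℕ) (w : V) :
    ℕ ×ₗ (S ×ₗ (ℕ ×ₗ ℕ)) :=
  toLex ((G.pend w).ncard, toLex (G.col w, toLex (G.deg w, r w)))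

def altCode (G : CMGraph V S) (r : V → ℕ) : List V → List ℕ
  | [] => []
  | [w] => [r w]
  | w :: w' :: rest => r w :: G.mul w w' :: altCode G r (w' :: rest)

/-- n(P): total number of vertices in pendent trees at internal vertices of `p`. -/
noncomputable def npend (G : CMGraph V S) [Fintype V] {u v : V} (p : G.toSimple.Walk u v) : ℕ :=
  (((p.support.drop 1).dropLast).map (fun w => (G.pend w).ncard)).sum

/-- code(P(u,v;C)) as a sequence of naturals. -/
noncomputable def pathCode (G : CMGraph V S) [Fintype V] (r : V → ℕ) {u v : V}
    (p : G.toSimple.Walk u v) : List ℕ :=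
  (Nat.card V - G.npend p) :: p.length :: G.altCode r p.support

/-- `L` is code*(u): the codes of the three paths `P(u,v;C_i)` arranged
in non-ascending lexicographical order. -/
def CodeStarOf (G : CMGraph V S) [Fintype V] (r : V → ℕ) (u v : V)
    (L : List (List ℕ)) : Prop :=
  ∃ (w₁ w₂ w₃ : V) (c₁ : G.toSimple.Walk w₁ w₁) (c₂ : G.toSimple.Walk w₂ w₂)
    (c₃ : G.toSimple.Walk w₃ w₃) (p₁ p₂ p₃ : G.toSimple.Walk u v),
    c₁.IsCycle ∧ c₂.IsCycle ∧ c₃.IsCycle ∧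
    ({e | e ∈ c₁.edges} ≠ {e | e ∈ c₂.edges}) ∧
    ({e | e ∈ c₁.edges} ≠ {e | e ∈ c₃.edges}) ∧
    ({e | e ∈ c₂.edges} ≠ {e | e ∈ c₃.edges}) ∧
    G.Avoids p₁ c₁ ∧ G.Avoids p₂ c₂ ∧ G.Avoids p₃ c₃ ∧
    L.Perm [G.pathCode r p₁, G.pathCode r p₂, G.pathCode r p₃] ∧
    L.Pairwise (fun a b => listLe b a)

/-- (code(u), code*(u)) ≼ (code(v), code*(v)) lexicographically. -/
def JCodeLe (G : CMGraph V S) [Fintype V] [LinearOrder S] (r : V → ℕ) (u v : V) :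
    Prop :=
  G.codeT r u < G.codeT r v ∨
  (G.codeT r u = G.codeT r v ∧
    ∀ Lu Lv, G.CodeStarOf r u v Lu → G.CodeStarOf r v u Lv → listListLe Lu Lv)

/-- (code(u), code*(u)) ≺ (code(v), code*(v)) strictly. -/
def JCodeLt (G : CMGraph V S) [Fintype V] [LinearOrder S] (r : V → ℕ) (u v : V) :
    Prop :=
  G.codeT r u < G.codeT r v ∨
  (G.codeT r u = G.codeT r v ∧
    ∃ Lu Lv, G.CodeStarOf r u v Lu ∧ G.CodeStarOf r v u Lv ∧
      List.Lex (List.Lex (· < ·)) Lu Lv)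

/-- `P` is the parent of the mono-block 2-augmented tree `H`: delete all edges
between the lexicographically smaller junction `u` and its neighbor on the
avoiding path with lexicographically minimum code. -/
def ParentRel (H P : CMGraph V S) [Fintype V] [DecidableEq V] [LinearOrder S]
    (r : V → ℕ) : Prop :=
  ∃ u v : V, u ≠ v ∧ H.IsJunction u ∧ H.IsJunction v ∧ H.JCodeLe r u v ∧
    ∃ (w : V) (c : H.toSimple.Walk w w) (p : H.toSimple.Walk u v),
      c.IsCycle ∧ H.Avoids p c ∧
      (∀ (w' : V) (c' : H.toSimple.Walk w' w') (p' : H.toSimple.Walk u v),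
        c'.IsCycle → H.Avoids p' c' → listLe (H.pathCode r p) (H.pathCode r p')) ∧
      P = H.removePair u (p.getVert 1)

/-- `H` is a child of `G`: the parent of `H` is isomorphic to `G`. -/
def IsChildOf (H G : CMGraph V S) [Fintype V] [DecidableEq V] [LinearOrder S]
    (r : V → ℕ) : Prop :=
  ∃ P : CMGraph V S, ParentRel H P r ∧ CMIso P G

end CMGraph

private lemma not_listLe_of_head_lt {A B : ℕ} {s t : List ℕ} (h : B < A) :
    ¬ listLe (A :: s) (B :: t) := by
  rintro (heq | hlex)
  · injection heq with h1 h2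
    omega
  · cases hlex with
    | cons _ => omega
    | rel h' => omega

private lemma walk_length_one_edge {V : Type} {G : SimpleGraph V} {u v : V}
    (p : G.Walk u v) (h : p.length = 1) : G.Adj u v ∧ s(u, v) ∈ p.edges := by
  cases p with
  | nil => simp at h
  | cons hadj q =>
    have h0 : q.length = 0 := by simpa using h
    cases q with
    | nil => exact ⟨hadj, by simp⟩
    | cons _ _ => simp at h0

/-- If the junctions u, v of a mono-block 2-augmented tree satisfy
(code(u), code*(u)) ≺ (code(v), code*(v)) strictly, then the avoiding path with
lexicographically minimum code has length at least 2. -/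
theorem min_code_path_length_ge_two {V S : Type} [Fintype V] [DecidableEq V]
    [LinearOrder S] (H : CMGraph V S) (h : H.IsMB2AT)
    (u v : V) (hne : u ≠ v) (hu : H.IsJunction u) (hv : H.IsJunction v)
    (r : V → ℕ) (hr : H.RankSpec r)
    (hlt : H.JCodeLt r u v)
    (w : V) (cstar : H.toSimple.Walk w w) (hcy : cstar.IsCycle)
    (pstar : H.toSimple.Walk u v) (hav : H.Avoids pstar cstar)
    (hmin : ∀ (w' : V) (c' : H.toSimple.Walk w' w') (p' : H.toSimple.Walk u v),
      c'.IsCycle → H.Avoids p' c' →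
        listLe (H.pathCode r pstar) (H.pathCode r p')) :
    2 ≤ pstar.length := by
  by_contra hcon
  push_neg at hcon
  -- pstar has length exactly 1
  have hlen1 : pstar.length = 1 := by
    have h0 : pstar.length ≠ 0 := fun h0 =>
      hne (SimpleGraph.Walk.eq_of_length_eq_zero h0)
    omega
  obtain ⟨hadj, hedge⟩ := walk_length_one_edge pstar hlen1
  have hsuv : s(u, v) ∉ cstar.edges := hav.2 _ hedge
  have humem : u ∈ cstar.support := hu.2 w cstar hcy
  have hvmem : v ∈ cstar.support := hv.2 w cstar hcy
  set c : H.toSimple.Walk u u := cstar.rotate u humem with hcdef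
  have hccy : c.IsCycle := hcy.rotate humem
  have hvc : v ∈ c.support := by
    have h1 : v ∈ ((cstar.takeUntil u humem).append (cstar.dropUntil u humem)).support := by
      rw [cstar.take_spec humem]; exact hvmem
    rw [SimpleGraph.Walk.mem_support_append_iff] at h1
    show v ∈ ((cstar.dropUntil u humem).append (cstar.takeUntil u humem)).support
    rw [SimpleGraph.Walk.mem_support_append_iff]
    exact h1.symm
  set arc1 : H.toSimple.Walk u v := c.takeUntil v hvc with harc1def
  set arc2 : H.toSimple.Walk v u := c.dropUntil v hvc with harc2def
  have hspec : arc1.append arc2 = c := c.take_spec hvc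
  -- edges
  have hmemc : ∀ e, e ∈ c.edges ↔ e ∈ cstar.edges := fun e =>
    (cstar.rotate_edges u humem).perm.mem_iff
  have hednd : (arc1.edges ++ arc2.edges).Nodup := by
    rw [← SimpleGraph.Walk.edges_append, hspec]
    exact hccy.isCircuit.isTrail.edges_nodup
  rw [List.nodup_append] at hednd
  obtain ⟨-, -, edisj⟩ := hednd
  have harc1sub : ∀ e ∈ arc1.edges, e ∈ cstar.edges := by
    intro e he
    rw [← hmemc, ← hspec, SimpleGraph.Walk.edges_append, List.mem_append]
    exact Or.inl he
  have harc2sub : ∀ e ∈ arc2.edges, e ∈ cstar.edges := by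
    intro e he
    rw [← hmemc, ← hspec, SimpleGraph.Walk.edges_append, List.mem_append]
    exact Or.inr he
  -- supports
  have htail : c.support.tail = arc1.support.tail ++ arc2.support.tail := by
    have h1 : c.support = arc1.support ++ arc2.support.tail := by
      rw [← hspec, SimpleGraph.Walk.support_append]
    rw [SimpleGraph.Walk.support_eq_cons c, SimpleGraph.Walk.support_eq_cons arc1] at h1
    exact (List.cons.inj h1).2
  have hsupnd := hccy.support_nodup
  rw [htail, List.nodup_append] at hsupnd
  obtain ⟨nd1, nd2, sdisj⟩ := hsupnd
  have hv1 : v ∈ arc1.support.tail := by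
    have hm := arc1.end_mem_support
    rw [SimpleGraph.Walk.support_eq_cons arc1, List.mem_cons] at hm
    rcases hm with hm | hm
    · exact absurd hm.symm hne
    · exact hm
  have hu2 : u ∈ arc2.support.tail := by
    have hm := arc2.end_mem_support
    rw [SimpleGraph.Walk.support_eq_cons arc2, List.mem_cons] at hm
    rcases hm with hm | hm
    · exact absurd hm hne
    · exact hm
  have harc1path : arc1.IsPath := by
    rw [SimpleGraph.Walk.isPath_def, SimpleGraph.Walk.support_eq_cons arc1, List.nodup_cons]
    exact ⟨fun hmem => sdisj u hmem u hu2 rfl, nd1⟩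
  have harc2path : arc2.IsPath := by
    rw [SimpleGraph.Walk.isPath_def, SimpleGraph.Walk.support_eq_cons arc2, List.nodup_cons]
    exact ⟨fun hmem => sdisj v hv1 v hmem rfl, nd2⟩
  -- the new cycle through the edge uv
  have hc'cy : (SimpleGraph.Walk.cons hadj arc2).IsCycle := by
    rw [SimpleGraph.Walk.cons_isCycle_iff]
    exact ⟨harc2path, fun hmem => hsuv (harc2sub _ hmem)⟩
  have havoid : H.Avoids arc1 (SimpleGraph.Walk.cons hadj arc2) := by
    refine ⟨harc1path, ?_⟩
    intro e he
    rw [SimpleGraph.Walk.edges_cons, List.mem_cons]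
    rintro (rfl | hmem)
    · exact hsuv (harc1sub _ he)
    · exact edisj _ he _ hmem rfl
  -- arc1 has length ≥ 2
  have harc1len : 2 ≤ arc1.length := by
    have h0 : arc1.length ≠ 0 := fun h0 =>
      hne (SimpleGraph.Walk.eq_of_length_eq_zero h0)
    have h1 : arc1.length ≠ 1 := by
      intro h1
      obtain ⟨-, he⟩ := walk_length_one_edge arc1 h1
      exact hsuv (harc1sub _ he)
    omega
  -- npend of arc1 is positive
  have hnp1 : 1 ≤ H.npend arc1 := by
    have hl : ((arc1.support.drop 1).dropLast).length = arc1.length - 1 := by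
      rw [List.length_dropLast, List.length_drop, SimpleGraph.Walk.length_support]
      omega
    have hne' : (arc1.support.drop 1).dropLast ≠ [] := by
      intro h; rw [h] at hl; simp at hl; omega
    obtain ⟨x, hx⟩ := List.exists_mem_of_ne_nil _ hne'
    have hx1 : 1 ≤ (H.pend x).ncard := by
      rw [Nat.one_le_iff_ne_zero, ← Nat.pos_iff_ne_zero, Set.ncard_pos (Set.toFinite _)]
      exact ⟨x, SimpleGraph.Reachable.refl x⟩
    have hmem : (H.pend x).ncard ∈ ((arc1.support.drop 1).dropLast).map
        (fun w => (H.pend w).ncard) := List.mem_map_of_mem hx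
    calc 1 ≤ (H.pend x).ncard := hx1
      _ ≤ _ := List.single_le_sum (fun y _ => Nat.zero_le y) _ hmem
  -- npend of pstar is zero
  have hnp0 : H.npend pstar = 0 := by
    have hl0 : ((pstar.support.drop 1).dropLast) = [] := by
      apply List.eq_nil_of_length_eq_zero
      rw [List.length_dropLast, List.length_drop, SimpleGraph.Walk.length_support, hlen1]
    unfold CMGraph.npend
    rw [hl0]
    rfl
  have : Nonempty V := ⟨u⟩
  have hcard : 1 ≤ Nat.card V := Nat.card_pos
  -- contradiction with minimality
  have hle := hmin u (SimpleGraph.Walk.cons hadj arc2) arc1 hc'cy havoid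
  unfold CMGraph.pathCode at hle
  rw [hnp0, Nat.sub_zero] at hle
  have hba : Nat.card V - H.npend arc1 < Nat.card V := by omega
  exact not_listLe_of_head_lt hba hle
end
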